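/- Let G = (V,E) be a finite connected graph and construct G' from G by adding, for each edge e = uv ∈ E, a set K_e of m ≥ 1 new vertices forming a clique, joined completely to both u and v. Assign weight 0 to every original edge of E and weight 1 to every newly added edge. Then for every minimum spanning tree T' of G', the set of original edges contained in T' (i.e., T' ∩ E) forms a spanning tree of G. -/

import Mathlib

open Classical

/-- The total weight of (the edges of) a graph `T`, viewed as a candidate spanning tree. -/
noncomputable def treeWeight {V : Type*} [Finite V] (w : Sym2 V → ℝ) (T : SimpleGraph V) : ℝ :=
  ∑ e ∈ T.edgeSet.toFinite.toFinset, w e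

/-- `T` is a spanning tree of `G`: a subgraph of `G` (on the same vertex set) that is a tree. -/
def IsSpanningTree {V : Type*} (G T : SimpleGraph V) : Prop := T ≤ G ∧ T.IsTree

/-- `T` is a minimum spanning tree of `(G, w)`. -/
def IsMST {V : Type*} [Finite V] (G : SimpleGraph V) (w : Sym2 V → ℝ)
    (T : SimpleGraph V) : Prop :=
  IsSpanningTree G T ∧ ∀ T', IsSpanningTree G T' → treeWeight w T ≤ treeWeight w T'

/-- The graph `G'` obtained from `G` by adding, for each edge `e` of `G`, a clique `K_e` of `m`
new vertices, each joined to both endpoints of `e`. -/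
def augGraph {V : Type*} (G : SimpleGraph V) (m : ℕ) :
    SimpleGraph (V ⊕ (G.edgeSet × Fin m)) where
  Adj a b :=
    match a, b with
    | Sum.inl u, Sum.inl v => G.Adj u v
    | Sum.inl u, Sum.inr p => u ∈ (p.1 : Sym2 V)
    | Sum.inr p, Sum.inl u => u ∈ (p.1 : Sym2 V)
    | Sum.inr p, Sum.inr q => p.1 = q.1 ∧ p.2 ≠ q.2
  symm := by
    refine ⟨?_⟩
    rintro (u | ⟨e, i⟩) (v | ⟨f, j⟩) h
    · exact G.adj_symm h
    · exact h
    · exact h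
    · exact ⟨h.1.symm, h.2.symm⟩
  loopless := by
    refine ⟨?_⟩
    rintro (u | ⟨e, i⟩) h
    · exact G.ne_of_adj h rfl
    · exact h.2 rfl

open SimpleGraph in
lemma cross_edge {V : Type*} {G H : SimpleGraph V} :
    ∀ {u v : V}, G.Walk u v → ¬H.Reachable u v →
      ∃ a b, G.Adj a b ∧ ¬H.Reachable a b := by
  intro u v p
  induction p with
  | nil => exact fun h => absurd (Reachable.refl _) h
  | @cons x y z h p ih =>
    intro hne
    by_cases hr : H.Reachable x y
    · exact ih (fun h2 => hne (hr.trans h2))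
    · exact ⟨x, y, h, hr⟩

open SimpleGraph in
lemma acyclic_sup_edge {V : Type*} {H : SimpleGraph V} {a b : V} (hac : H.IsAcyclic)
    (hab : a ≠ b) (hr : ¬H.Reachable a b) : (H ⊔ SimpleGraph.edge a b).IsAcyclic := by
  intro v c hc
  by_cases he : s(a, b) ∈ c.edges
  · have h2 : (H ⊔ edge a b).Adj a b ∧
        ((H ⊔ edge a b) \ fromEdgeSet {s(a, b)}).Reachable a b :=
      (adj_and_reachable_delete_edges_iff_exists_cycle).2 ⟨v, c, hc, he⟩
    refine hr (h2.2.mono ?_)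
    intro x y hxy
    rw [sdiff_adj, sup_adj, fromEdgeSet_adj] at hxy
    obtain ⟨hxy1 | hxy1, hxy2⟩ := hxy
    · exact hxy1
    · exfalso
      rw [edge_adj] at hxy1
      refine hxy2 ⟨?_, hxy1.2⟩
      rcases hxy1.1 with ⟨rfl, rfl⟩ | ⟨rfl, rfl⟩
      · rfl
      · exact Sym2.eq_swap
  · have hsub : ∀ e ∈ c.edges, e ∈ H.edgeSet := by
      intro e hmem
      have h1 := c.edges_subset_edgeSet hmem
      rw [edgeSet_sup, edge_edgeSet_of_ne hab] at h1
      rcases h1 with h1 | h1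
      · exact h1
      · exact absurd (h1 ▸ hmem) he
    exact hac (c.transfer H hsub) (hc.transfer hsub)

open SimpleGraph in
lemma exists_tree_between {V : Type*} [Finite V] {G : SimpleGraph V} (hG : G.Connected) :
    ∀ (n : ℕ) (H : SimpleGraph V), H ≤ G → H.IsAcyclic →
      G.edgeSet.ncard ≤ H.edgeSet.ncard + n →
      ∃ S, H ≤ S ∧ S ≤ G ∧ S.IsTree := by
  intro n
  induction n with
  | zero =>
    intro H hle hac hcard
    have h1 : H.edgeSet ⊆ G.edgeSet := edgeSet_mono hle
    have h2 : H.edgeSet = G.edgeSet :=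
      Set.eq_of_subset_of_ncard_le h1 (by omega) G.edgeSet.toFinite
    have h3 : H = G := edgeSet_inj.1 h2
    exact ⟨H, le_rfl, hle, ⟨h3 ▸ hG, hac⟩⟩
  | succ n ih =>
    intro H hle hac hcard
    by_cases hc : H.Connected
    · exact ⟨H, le_rfl, hle, ⟨hc, hac⟩⟩
    · have hne : Nonempty V := hG.nonempty
      have hp : ¬H.Preconnected := fun hp => hc ⟨hp⟩
      rw [Preconnected] at hp
      push_neg at hp
      obtain ⟨u, v, huv⟩ := hp
      obtain ⟨a, b, hadj, hnr⟩ := cross_edge ((hG.preconnected u v).some) huv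
      have hab : a ≠ b := hadj.ne
      have hle' : H ⊔ edge a b ≤ G := by
        refine sup_le hle ?_
        intro x y hxy
        rw [edge_adj] at hxy
        rcases hxy.1 with ⟨rfl, rfl⟩ | ⟨rfl, rfl⟩
        · exact hadj
        · exact hadj.symm
      have hac' := acyclic_sup_edge hac hab hnr
      have hcardH' : (H ⊔ edge a b).edgeSet.ncard = H.edgeSet.ncard + 1 := by
        rw [edgeSet_sup, edge_edgeSet_of_ne hab, Set.union_singleton]
        exact Set.ncard_insert_of_notMem (fun hmem => hnr (Adj.reachable hmem))
          H.edgeSet.toFinite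
      obtain ⟨S, h1, h2, h3⟩ := ih (H ⊔ edge a b) hle' hac' (by omega)
      exact ⟨S, le_trans le_sup_left h1, h2, h3⟩

/-- If every original edge of `G` gets weight `0` and every newly added edge gets weight `1`,
then the original edges contained in any minimum spanning tree of `G'` form a spanning tree
of `G`. -/
theorem augGraph_mst_restricts_to_spanning_tree {V : Type*} [Fintype V] (G : SimpleGraph V)
    (hG : G.Connected) (m : ℕ) (hm : 1 ≤ m)
    (T' : SimpleGraph (V ⊕ (G.edgeSet × Fin m)))
    (hT' : IsMST (augGraph G m)
      (fun e => if e ∈ Sym2.map Sum.inl '' G.edgeSet then (0 : ℝ) else 1) T') :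
    IsSpanningTree G
      (SimpleGraph.fromEdgeSet {f | f ∈ G.edgeSet ∧ Sym2.map Sum.inl f ∈ T'.edgeSet}) := by
  classical
  haveI : Fintype G.edgeSet := Fintype.ofFinite _
  have hneV : Nonempty V := hG.nonempty
  set img : Set (Sym2 (V ⊕ (G.edgeSet × Fin m))) := Sym2.map Sum.inl '' G.edgeSet with himg
  obtain ⟨⟨hle', htree'⟩, hmin⟩ := hT'
  set Hset : Set (Sym2 V) := {f | f ∈ G.edgeSet ∧ Sym2.map Sum.inl f ∈ T'.edgeSet} with hHsetdef
  set H := SimpleGraph.fromEdgeSet Hset with hHdef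
  -- basic facts about H
  have hHle : H ≤ G := by
    intro x y hxy
    rw [hHdef, SimpleGraph.fromEdgeSet_adj] at hxy
    exact hxy.1.1
  have hHedge : H.edgeSet = Hset := by
    rw [hHdef, SimpleGraph.edgeSet_fromEdgeSet]
    ext f
    constructor
    · exact fun h => h.1
    · exact fun h => ⟨h, G.not_isDiag_of_mem_edgeSet h.1⟩
  have hmapadj : ∀ {x y : V}, H.Adj x y → T'.Adj (Sum.inl x) (Sum.inl y) := by
    intro x y hxy
    rw [hHdef, SimpleGraph.fromEdgeSet_adj] at hxy
    have h1 := hxy.1.2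
    rw [Sym2.map_pair_eq] at h1
    exact T'.mem_edgeSet.1 h1
  have hHac : H.IsAcyclic := by
    intro v c hc
    exact htree'.IsAcyclic
      (c.map (⟨Sum.inl, fun h => hmapadj h⟩ : H →g T'))
      ((SimpleGraph.Walk.map_isCycle_iff_of_injective Sum.inl_injective).2 hc)
  -- cardinality of H's edges = number of "original" edges of T'
  have hgoodcard : H.edgeSet.ncard = (T'.edgeFinset.filter (fun e => e ∈ img)).card := by
    rw [Set.ncard_eq_toFinset_card']
    apply Finset.card_bij (fun f _ => Sym2.map Sum.inl f)
    · intro f hf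
      rw [Set.mem_toFinset, hHedge] at hf
      rw [Finset.mem_filter, SimpleGraph.mem_edgeFinset]
      exact ⟨hf.2, ⟨f, hf.1, rfl⟩⟩
    · intro f1 h1 f2 h2 h
      exact Sym2.map.injective Sum.inl_injective h
    · intro g hg
      rw [Finset.mem_filter, SimpleGraph.mem_edgeFinset] at hg
      obtain ⟨hgT, f, hf, rfl⟩ := hg
      exact ⟨f, by rw [Set.mem_toFinset, hHedge]; exact ⟨hf, hgT⟩, rfl⟩
  -- weight of any graph equals the number of its non-original edges
  have hweight : ∀ K : SimpleGraph (V ⊕ (G.edgeSet × Fin m)),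
      treeWeight (fun e => if e ∈ img then (0 : ℝ) else 1) K
        = ((K.edgeFinset.filter (fun e => e ∉ img)).card : ℝ) := by
    intro K
    have h0 : K.edgeSet.toFinite.toFinset = K.edgeFinset := by
      ext e
      rw [Set.Finite.mem_toFinset, SimpleGraph.mem_edgeFinset]
    simp only [treeWeight, h0]
    rw [Finset.sum_congr rfl (g := fun e => if e ∉ img then (1 : ℝ) else 0)
      (fun e _ => by by_cases h : e ∈ img <;> simp [h])]
    rw [← Finset.sum_filter, Finset.sum_const, nsmul_eq_mul, mul_one]
  -- the cheap comparison graph G₁ and its spanning tree S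
  set F : G.edgeSet × Fin m → Sym2 (V ⊕ (G.edgeSet × Fin m)) :=
    fun p => s(Sum.inr p, Sum.inl ((p.1 : Sym2 V).out).1) with hFdef
  set G₁ := SimpleGraph.fromEdgeSet (img ∪ Set.range F) with hG₁def
  have hG₁le : G₁ ≤ augGraph G m := by
    intro x y hxy
    rw [hG₁def, SimpleGraph.fromEdgeSet_adj] at hxy
    obtain ⟨hmem | hmem, hne⟩ := hxy
    · obtain ⟨f, hf, heq⟩ := hmem
      induction f using Sym2.ind with
      | _ u v =>
        rw [Sym2.map_pair_eq, Sym2.eq_iff] at heq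
        have hadj : G.Adj u v := G.mem_edgeSet.1 hf
        rcases heq with ⟨rfl, rfl⟩ | ⟨rfl, rfl⟩
        · exact hadj
        · exact hadj.symm
    · obtain ⟨p, heq⟩ := hmem
      rw [hFdef, Sym2.eq_iff] at heq
      rcases heq with ⟨rfl, rfl⟩ | ⟨rfl, rfl⟩
      · exact Sym2.out_fst_mem _
      · exact Sym2.out_fst_mem _
  have hinlAdj : ∀ {u v : V}, G.Adj u v → G₁.Adj (Sum.inl u) (Sum.inl v) := by
    intro u v h
    rw [hG₁def, SimpleGraph.fromEdgeSet_adj]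
    exact ⟨Or.inl ⟨s(u, v), h, Sym2.map_pair_eq Sum.inl u v⟩,
      fun hh => h.ne (Sum.inl_injective hh)⟩
  have hreachinl : ∀ u v : V, G₁.Reachable (Sum.inl u) (Sum.inl v) := by
    intro u v
    exact SimpleGraph.Reachable.map (⟨Sum.inl, fun h => hinlAdj h⟩ : G →g G₁)
      (hG.preconnected u v)
  have hadjr : ∀ p : G.edgeSet × Fin m,
      G₁.Adj (Sum.inr p) (Sum.inl ((p.1 : Sym2 V).out).1) := by
    intro p
    rw [hG₁def, SimpleGraph.fromEdgeSet_adj]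
    exact ⟨Or.inr ⟨p, rfl⟩, by simp⟩
  have hG₁conn : G₁.Connected := by
    rw [SimpleGraph.connected_iff]
    refine ⟨?_, ⟨Sum.inl hneV.some⟩⟩
    rintro (u | p) (v | q)
    · exact hreachinl u v
    · exact (hreachinl u _).trans (hadjr q).reachable.symm
    · exact (hadjr p).reachable.trans (hreachinl _ v)
    · exact ((hadjr p).reachable.trans (hreachinl _ _)).trans (hadjr q).reachable.symm
  obtain ⟨S, hS1, hS2, hS3⟩ := exists_tree_between hG₁conn G₁.edgeSet.ncard ⊥ bot_le
    SimpleGraph.isAcyclic_bot (by simp)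
  -- the spanning tree S has few non-original edges
  have hbadS : (S.edgeFinset.filter (fun e => e ∉ img)).card
      ≤ Fintype.card (G.edgeSet × Fin m) := by
    have hsub : S.edgeFinset.filter (fun e => e ∉ img) ⊆ Finset.univ.image F := by
      intro e he
      rw [Finset.mem_filter, SimpleGraph.mem_edgeFinset] at he
      have h1 : e ∈ G₁.edgeSet := SimpleGraph.edgeSet_mono hS2 he.1
      rw [hG₁def, SimpleGraph.edgeSet_fromEdgeSet] at h1
      rcases h1.1 with h | h
      · exact absurd h he.2
      · obtain ⟨p, hp⟩ := h
        exact Finset.mem_image.2 ⟨p, Finset.mem_univ _, hp⟩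
    calc (S.edgeFinset.filter (fun e => e ∉ img)).card
        ≤ (Finset.univ.image F).card := Finset.card_le_card hsub
      _ ≤ (Finset.univ : Finset (G.edgeSet × Fin m)).card := Finset.card_image_le
      _ = Fintype.card (G.edgeSet × Fin m) := Finset.card_univ
  -- MST comparison
  have hcomp := hmin S ⟨le_trans hS2 hG₁le, hS3⟩
  rw [hweight T', hweight S] at hcomp
  have hbadT' : (T'.edgeFinset.filter (fun e => e ∉ img)).card
      ≤ Fintype.card (G.edgeSet × Fin m) :=
    le_trans (Nat.cast_le.1 hcomp) hbadS
  -- edge counting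
  have hTcard : T'.edgeFinset.card + 1 = Fintype.card (V ⊕ (G.edgeSet × Fin m)) :=
    htree'.card_edgeFinset
  have hsplit : (T'.edgeFinset.filter (fun e => e ∈ img)).card
      + (T'.edgeFinset.filter (fun e => e ∉ img)).card = T'.edgeFinset.card :=
    Finset.card_filter_add_card_filter_not _
  have hcardV' : Fintype.card (V ⊕ (G.edgeSet × Fin m))
      = Fintype.card V + Fintype.card (G.edgeSet × Fin m) := Fintype.card_sum
  have hlow : Fintype.card V ≤ H.edgeSet.ncard + 1 := by
    rw [hgoodcard]; omega
  -- conclude: H is a spanning tree of G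
  obtain ⟨S', hS'1, hS'2, hS'3⟩ :=
    exists_tree_between hG G.edgeSet.ncard H hHle hHac (by omega)
  have hS'card : S'.edgeSet.ncard + 1 = Fintype.card V := by
    rw [Set.ncard_eq_toFinset_card']
    exact hS'3.card_edgeFinset
  have hsub2 : H.edgeSet ⊆ S'.edgeSet := SimpleGraph.edgeSet_mono hS'1
  have heq2 : H.edgeSet = S'.edgeSet :=
    Set.eq_of_subset_of_ncard_le hsub2 (by omega) S'.edgeSet.toFinite
  have heq3 : H = S' := SimpleGraph.edgeSet_inj.1 heq2
  exact ⟨hHle, heq3 ▸ hS'3⟩
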